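/- Let T be the operator Tf(e,r) = (1/(r²√(2(e−φ_Q(r))))) ∂_r f acting on smooth functions on U = {(r,e): e−φ_Q(r) > 0}, and let g(r,e) = (r√(2(e−φ_Q(r))))³. Then −T²g/g = 3(ρ_Q(r) + φ_Q'(r)/r) / (r√(2(e−φ_Q(r))))⁴, where ρ_Q(r) = (8π√2/3)∫_{-∞}^0 |F'(e)|(e−φ_Q(r))₊^{3/2} de. -/

import Mathlib

open MeasureTheory Real Filter Set

noncomputable section

/-- The operator `T f(r,e) = (1/(r²√(2(e−φ_Q(r))))) ∂_r f`. -/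
def Tvec (φQ : ℝ → ℝ) (u : ℝ × ℝ → ℝ) (q : ℝ × ℝ) : ℝ :=
  (deriv (fun r => u (r, q.2)) q.1) / (q.1 ^ 2 * Real.sqrt (2 * (q.2 - φQ q.1)))

/-- The weight function `g(r,e) = (r√(2(e−φ_Q(r))))³`. -/
def gfun (φQ : ℝ → ℝ) (q : ℝ × ℝ) : ℝ :=
  (q.1 * Real.sqrt (2 * (q.2 - φQ q.1))) ^ 3

lemma Tg_eq (φQ : ℝ → ℝ) (hφQ : ContDiff ℝ 2 φQ) {r e : ℝ} (hr : 0 < r) (he : φQ r < e) :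
    Tvec φQ (gfun φQ) (r, e) = 6 * (e - φQ r) - 3 * r * deriv φQ r := by
  have hpos : 0 < 2 * (e - φQ r) := by linarith
  set S := Real.sqrt (2 * (e - φQ r)) with hS
  have hSpos : 0 < S := Real.sqrt_pos.mpr hpos
  have hS2 : S ^ 2 = 2 * (e - φQ r) := Real.sq_sqrt hpos.le
  have hφd : HasDerivAt φQ (deriv φQ r) r :=
    ((hφQ.differentiable (by norm_num)) r).hasDerivAt
  have h1 : HasDerivAt (fun x => 2 * (e - φQ x)) (2 * (0 - deriv φQ r)) r :=
    (((hasDerivAt_const r e).sub hφd).const_mul 2)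
  have h2 : HasDerivAt (fun x => Real.sqrt (2 * (e - φQ x)))
      (1 / (2 * S) * (2 * (0 - deriv φQ r))) r :=
    (Real.hasDerivAt_sqrt hpos.ne').comp r h1
  have h3 : HasDerivAt (fun x => x * Real.sqrt (2 * (e - φQ x)))
      (1 * S + r * (1 / (2 * S) * (2 * (0 - deriv φQ r)))) r :=
    (hasDerivAt_id r).mul h2
  have hg := h3.fun_pow 3
  show deriv (fun x => (x * Real.sqrt (2 * (e - φQ x))) ^ 3) r / (r ^ 2 * S) = _
  rw [hg.deriv]
  push_cast
  field_simp
  rw [← hS]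
  linear_combination (3 * S ^ 2) * hS2

theorem convexity_identity (φQ ρQ F' : ℝ → ℝ)
    (hφQ : ContDiff ℝ 2 φQ)
    (hPoisson : ∀ r : ℝ, 0 < r →
      deriv (deriv φQ) r + (2 / r) * deriv φQ r = ρQ r)
    (hρQ : ∀ r : ℝ,
      ρQ r = (8 * π * Real.sqrt 2 / 3) *
        ∫ e in Iio (0 : ℝ), |F' e| * (max (e - φQ r) 0) ^ ((3 : ℝ) / 2)) :
    ∀ r e : ℝ, 0 < r → φQ r < e →
      -(Tvec φQ (Tvec φQ (gfun φQ)) (r, e)) / gfun φQ (r, e)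
        = 3 * (ρQ r + deriv φQ r / r) /
            (r * Real.sqrt (2 * (e - φQ r))) ^ 4 := by
  intro r e hr he
  have hpos : 0 < 2 * (e - φQ r) := by linarith
  set S := Real.sqrt (2 * (e - φQ r)) with hS
  have hSpos : 0 < S := Real.sqrt_pos.mpr hpos
  have hS2 : S ^ 2 = 2 * (e - φQ r) := Real.sq_sqrt hpos.le
  have hφ'cd : ContDiff ℝ 1 (deriv φQ) := by
    have h2 : ContDiff ℝ ((1 : ℕ) + 1) φQ := by exact_mod_cast hφQ
    exact (contDiff_succ_iff_deriv.mp h2).2.2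
  have hφd : HasDerivAt φQ (deriv φQ r) r :=
    ((hφQ.differentiable (by norm_num)) r).hasDerivAt
  have hd2 : HasDerivAt (deriv φQ) (deriv (deriv φQ) r) r :=
    ((hφ'cd.differentiable (by norm_num)) r).hasDerivAt
  have hU : ∀ᶠ x in nhds r, 0 < x ∧ φQ x < e := by
    have hopen : IsOpen {x : ℝ | 0 < x ∧ φQ x < e} :=
      isOpen_Ioi.inter (isOpen_lt hφQ.continuous continuous_const)
    exact hopen.mem_nhds ⟨hr, he⟩
  have heq : (fun x => Tvec φQ (gfun φQ) (x, e)) =ᶠ[nhds r]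
      (fun x => 6 * (e - φQ x) - 3 * (x * deriv φQ x)) := by
    filter_upwards [hU] with x hx
    rw [Tg_eq φQ hφQ hx.1 hx.2]; ring
  have hRHS : HasDerivAt (fun x => 6 * (e - φQ x) - 3 * (x * deriv φQ x))
      (6 * (0 - deriv φQ r) - 3 * (1 * deriv φQ r + r * deriv (deriv φQ) r)) r :=
    (((hasDerivAt_const r e).sub hφd).const_mul 6).sub
      (((hasDerivAt_id r).mul hd2).const_mul 3)
  have hderiv1 : deriv (fun x => Tvec φQ (gfun φQ) (x, e)) r
      = 6 * (0 - deriv φQ r) - 3 * (1 * deriv φQ r + r * deriv (deriv φQ) r) := by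
    rw [heq.deriv_eq, hRHS.deriv]
  have hP := hPoisson r hr
  show -(deriv (fun x => Tvec φQ (gfun φQ) (x, e)) r / (r ^ 2 * S)) /
      (r * S) ^ 3 = 3 * (ρQ r + deriv φQ r / r) / (r * S) ^ 4
  rw [hderiv1]
  field_simp
  have hrne : r ≠ 0 := hr.ne'
  have hP' : r * deriv (deriv φQ) r + 2 * deriv φQ r = r * ρQ r := by
    field_simp at hP
    linarith [hP]
  linear_combination 3 * hP'
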